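/- The semigroup OX_n of order-preserving transformations on a finite chain is regular: for every order-preserving f : X_n → X_n there exists an order-preserving g : X_n → X_n such that f ∘ g ∘ f = f (composing left to right: f g f = f). -/
import Mathlib


/-- The semigroup of order-preserving transformations on a finite chain is
regular: for every order-preserving `f` there is an order-preserving `g` with
`f g f = f` (composing left to right). -/
theorem stmt4 (n : ℕ) (f : Fin n → Fin n) (hf : Monotone f) :
    ∃ g : Fin n → Fin n, Monotone g ∧ ∀ x, f (g (f x)) = f x := by
  match n with
  | 0 => exact ⟨f, hf, fun x => x.elim0⟩
  | m + 1 =>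
    set S : Fin (m+1) → Finset (Fin (m+1)) :=
      fun y => insert 0 (Finset.univ.filter fun x => f x ≤ y) with hS
    have hne : ∀ y, (S y).Nonempty := fun y => ⟨0, Finset.mem_insert_self _ _⟩
    refine ⟨fun y => (S y).max' (hne y), ?_, ?_⟩
    · intro y y' hy
      apply Finset.max'_subset
      intro a ha
      simp only [hS, Finset.mem_insert, Finset.mem_filter] at ha ⊢
      rcases ha with h | ⟨hu, h⟩
      · exact Or.inl h
      · exact Or.inr ⟨hu, le_trans h hy⟩
    · intro x
      have hx : x ∈ S (f x) := by
        simp [hS]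
      have hle : x ≤ (S (f x)).max' (hne _) := Finset.le_max' _ _ hx
      have hmem := (S (f x)).max'_mem (hne _)
      simp only [hS, Finset.mem_insert, Finset.mem_filter] at hmem
      rcases hmem with h | ⟨_, h⟩
      · have : x = 0 := le_antisymm (h ▸ hle) (Fin.zero_le x)
        simp only [hS]
        rw [h, ← this]
      · exact le_antisymm h (hf hle)
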